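/- arXiv:1708.01455 — 2 statements merged into one kernel-verified Lean document; each statement's English description precedes it below -/
import Mathlib

section
/- Let T⁻¹ ∈ ℝ^{n×n} be an invertible matrix, Δ > 0, and ũ ∈ ℝ^n. For each row i, let w_i be the number of nonzero entries of the i-th row of T⁻¹, and for each column j let R_j = {i : T⁻¹_{ij} ≠ 0}. Define a_j = max_{i∈R_j} (−sign(T⁻¹_{ij})·Δ − ũ_i)/(w_i·T⁻¹_{ij}) and b_j = min_{i∈R_j} (sign(T⁻¹_{ij})·Δ − ũ_i)/(w_i·T⁻¹_{ij}). If v ∈ ℝ^n satisfies a_j ≤ v_j ≤ b_j for all j, then ‖ũ + T⁻¹v‖_∞ ≤ Δ. -/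
open Finset

/-- bound constraints in untransformed coordinates guarantee the
trust-region constraint in transformed coordinates.  Here `Tinv` plays the role of `T⁻¹`,
`‖·‖` on `Fin n → ℝ` is the max norm, and `Real.sign x = 1` for `x > 0`, `-1` for `x < 0`.
`w i` is the number of nonzero entries of row `i` and `R j` the set of rows with a nonzero
entry in column `j`; every column is assumed to contain a nonzero entry, and `‖u‖_∞ ≤ Δ`. -/
theorem stmt2 (n : ℕ) (Tinv : Matrix (Fin n) (Fin n) ℝ) (hTinv : IsUnit Tinv.det)
    (Δ : ℝ) (hΔ : 0 < Δ) (u : Fin n → ℝ) (hu : ‖u‖ ≤ Δ)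
    (R : Fin n → Finset (Fin n)) (hR : ∀ j, R j = Finset.univ.filter (fun i => Tinv i j ≠ 0))
    (hRne : ∀ j, (R j).Nonempty)
    (w : Fin n → ℕ) (hw : ∀ i, w i = (Finset.univ.filter (fun j => Tinv i j ≠ 0)).card)
    (a b : Fin n → ℝ)
    (ha : ∀ j, a j =
      ((R j).image fun i => (-(Real.sign (Tinv i j)) * Δ - u i) / ((w i : ℝ) * Tinv i j)).max'
        ((hRne j).image _))
    (hb : ∀ j, b j =
      ((R j).image fun i => (Real.sign (Tinv i j) * Δ - u i) / ((w i : ℝ) * Tinv i j)).min'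
        ((hRne j).image _))
    (v : Fin n → ℝ) (hv : ∀ j, a j ≤ v j ∧ v j ≤ b j) :
    ‖u + Tinv.mulVec v‖ ≤ Δ := by
  have hnorm : ∀ i, |u i| ≤ Δ := fun i => by
    have := norm_le_pi_norm u i
    rw [Real.norm_eq_abs] at this
    exact this.trans hu
  rw [pi_norm_le_iff_of_nonneg hΔ.le]
  intro i
  rw [Pi.add_apply, Real.norm_eq_abs, abs_le]
  set S : Finset (Fin n) := Finset.univ.filter (fun j => Tinv i j ≠ 0) with hSdef
  have hsum : Tinv.mulVec v i = ∑ j ∈ S, Tinv i j * v j := by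
    rw [Matrix.mulVec, dotProduct]
    refine (Finset.sum_subset (Finset.subset_univ S) ?_).symm
    intro j _ hj
    have : Tinv i j = 0 := by
      by_contra h
      exact hj (Finset.mem_filter.2 ⟨Finset.mem_univ j, h⟩)
    simp [this]
  rcases Finset.eq_empty_or_nonempty S with hSe | hSne
  · rw [hsum, hSe]
    simp only [Finset.sum_empty, add_zero]
    exact abs_le.1 (hnorm i)
  · have hwcard : (w i : ℝ) = (S.card : ℝ) := by rw [hw i]
    have hwpos : (0 : ℝ) < (w i : ℝ) := by
      rw [hwcard]
      exact_mod_cast Finset.card_pos.2 hSne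
    have key : ∀ j ∈ S, Tinv i j * v j ≤ (Δ - u i) / (w i : ℝ) ∧
        (-Δ - u i) / (w i : ℝ) ≤ Tinv i j * v j := by
      intro j hj
      have hij : Tinv i j ≠ 0 := (Finset.mem_filter.1 hj).2
      have hiR : i ∈ R j := by
        rw [hR]; exact Finset.mem_filter.2 ⟨Finset.mem_univ i, hij⟩
      have hbj : b j ≤ (Real.sign (Tinv i j) * Δ - u i) / ((w i : ℝ) * Tinv i j) := by
        rw [hb j]
        apply Finset.min'_le
        exact Finset.mem_image_of_mem _ hiR
      have haj : (-(Real.sign (Tinv i j)) * Δ - u i) / ((w i : ℝ) * Tinv i j) ≤ a j := by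
        rw [ha j]
        apply Finset.le_max'
        exact Finset.mem_image_of_mem _ hiR
      have hva := (hv j).1
      have hvb := (hv j).2
      rcases lt_or_gt_of_ne hij with hneg | hpos
      · -- Tinv i j < 0, sign = -1
        rw [Real.sign_of_neg hneg] at hbj haj
        have hc : (w i : ℝ) * Tinv i j < 0 := mul_neg_of_pos_of_neg hwpos hneg
        rw [le_div_iff_of_neg hc] at hbj
        rw [div_le_iff_of_neg hc] at haj
        constructor
        · rw [le_div_iff₀ hwpos]
          nlinarith [mul_le_mul_of_nonpos_right hva hc.le]
        · rw [div_le_iff₀ hwpos]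
          nlinarith [mul_le_mul_of_nonpos_right hvb hc.le]
      · -- Tinv i j > 0, sign = 1
        rw [Real.sign_of_pos hpos] at hbj haj
        have hc : (0 : ℝ) < (w i : ℝ) * Tinv i j := mul_pos hwpos hpos
        rw [le_div_iff₀ hc] at hbj
        rw [div_le_iff₀ hc] at haj
        constructor
        · rw [le_div_iff₀ hwpos]
          nlinarith [mul_le_mul_of_nonneg_right hvb hc.le]
        · rw [div_le_iff₀ hwpos]
          nlinarith [mul_le_mul_of_nonneg_right hva hc.le]
    have hsum_le : ∑ j ∈ S, Tinv i j * v j ≤ Δ - u i := by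
      calc ∑ j ∈ S, Tinv i j * v j ≤ ∑ j ∈ S, (Δ - u i) / (w i : ℝ) :=
            Finset.sum_le_sum (fun j hj => (key j hj).1)
        _ = (S.card : ℝ) * ((Δ - u i) / (w i : ℝ)) := by
            rw [Finset.sum_const, nsmul_eq_mul]
        _ = Δ - u i := by rw [← hwcard]; field_simp
    have hle_sum : -Δ - u i ≤ ∑ j ∈ S, Tinv i j * v j := by
      calc -Δ - u i = (S.card : ℝ) * ((-Δ - u i) / (w i : ℝ)) := by
            rw [← hwcard]; field_simp
        _ = ∑ j ∈ S, (-Δ - u i) / (w i : ℝ) := by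
            rw [Finset.sum_const, nsmul_eq_mul]
        _ ≤ ∑ j ∈ S, Tinv i j * v j :=
            Finset.sum_le_sum (fun j hj => (key j hj).2)
    rw [hsum]
    constructor <;> linarith
end

section
/- Let (J^k, θ^k)_{k∈ℕ} be a sequence of pairs in ℝ × ℝ_{≥0} and fix 0 < ξ < 1. Suppose each pair (J^{k+1}, θ^{k+1}) is acceptable to the previous pairs in the sense that for all i ≤ k: either J^{k+1} < J^i − ξ·θ^{k+1} or θ^{k+1} < (1−ξ)·θ^i. If additionally (J^k) is bounded below and θ^k > 0 for all k, then θ^k → 0 as k → ∞. -/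
open Filter

/-- Every sequence of naturals has a monotone subsequence. -/
lemma nat_mono_subseq (f : ℕ → ℕ) : ∃ g : ℕ → ℕ, StrictMono g ∧ Monotone (f ∘ g) := by
  obtain ⟨g, hg⟩ := ((Set.isWF_univ_iff).mpr (inferInstance : WellFoundedLT ℕ)).isPWO.exists_monotone_subseq (f := f) (fun n => Set.mem_univ _)
  exact ⟨g, g.strictMono, hg⟩

/-- ceilings drop by one when the real value drops by `c`. -/
lemma ceil_decr {c x y : ℝ} (hc : 0 < c) (hx : 0 ≤ x) (hxy : x < y - c) :
    ⌈x / c⌉₊ < ⌈y / c⌉₊ := by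
  have hdiv : x / c + 1 < y / c := by
    have h := (div_lt_div_iff_of_pos_right hc).mpr (show x + c < y by linarith)
    rwa [add_div, div_self hc.ne'] at h
  have h1 : (⌈x / c⌉₊ : ℝ) < x / c + 1 := Nat.ceil_lt_add_one (by positivity)
  rw [Nat.lt_ceil]
  linarith

/-- filter convergence (Conn–Gould–Toint, Lemma 15.5.2).  If every new pair
`(J^{k+1}, θ^{k+1})` is acceptable to all previous pairs, the energies are bounded below
and all infeasibilities are positive, then the infeasibility converges to zero. -/
theorem stmt6 (J θ : ℕ → ℝ) (ξ : ℝ) (hξ : 0 < ξ ∧ ξ < 1)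
    (hθpos : ∀ k, 0 < θ k)
    (hbdd : ∃ C, ∀ k, C ≤ J k)
    (hacc : ∀ k, ∀ i ≤ k,
      J (k + 1) < J i - ξ * θ (k + 1) ∨ θ (k + 1) < (1 - ξ) * θ i) :
    Tendsto θ atTop (nhds 0) := by
  obtain ⟨hξ0, hξ1⟩ := hξ
  obtain ⟨C, hC⟩ := hbdd
  by_contra hnot
  rw [Metric.tendsto_atTop] at hnot
  push_neg at hnot
  obtain ⟨ε, hε, hfreq⟩ := hnot
  -- extract a subsequence with θ ≥ ε
  have hfreq' : ∀ N : ℕ, ∃ n > N, ε ≤ θ n := by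
    intro N
    obtain ⟨n, hn, hd⟩ := hfreq (N + 1)
    refine ⟨n, by omega, ?_⟩
    rw [Real.dist_eq, abs_sub_comm, abs_of_nonpos (by linarith [hθpos n])] at hd
    linarith
  obtain ⟨φ, hφmono, hφ⟩ := extraction_of_frequently_atTop (frequently_atTop'.mpr hfreq')
  -- key pairwise decrease
  have key : ∀ m n : ℕ, m < n →
      J (φ n) < J (φ m) - ξ * ε ∨ θ (φ n) < θ (φ m) - ξ * ε := by
    intro m n hmn
    have hlt : φ m < φ n := hφmono hmn
    have hk : φ n = (φ n - 1) + 1 := by omega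
    have := hacc (φ n - 1) (φ m) (by omega)
    rw [← hk] at this
    rcases this with h | h
    · left
      have := hφ n
      nlinarith
    · right
      have := hφ m
      nlinarith
  have hc : 0 < ξ * ε := by positivity
  set a1 : ℕ → ℕ := fun n => ⌈(J (φ n) - C) / (ξ * ε)⌉₊ with ha1
  set a2 : ℕ → ℕ := fun n => ⌈θ (φ n) / (ξ * ε)⌉₊ with ha2
  have keyN : ∀ m n : ℕ, m < n → a1 n < a1 m ∨ a2 n < a2 m := by
    intro m n hmn
    rcases key m n hmn with h | h
    · left
      exact ceil_decr hc (by linarith [hC (φ n)]) (by linarith)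
    · right
      exact ceil_decr hc (le_of_lt (hθpos (φ n))) h
  -- Dickson-style contradiction
  obtain ⟨g, hg, hmono1⟩ := nat_mono_subseq a1
  obtain ⟨g', hg', hmono2⟩ := nat_mono_subseq ((a2 ∘ g))
  have hlt : g (g' 0) < g (g' 1) := hg (hg' (by omega))
  have h1 : a1 (g (g' 0)) ≤ a1 (g (g' 1)) := hmono1 ((hg' (by omega)).le)
  have h2 : a2 (g (g' 0)) ≤ a2 (g (g' 1)) := hmono2 (by omega)
  rcases keyN (g (g' 0)) (g (g' 1)) hlt with h | h <;> omega
end
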